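/- Let (α, β) be a Bailey pair relative to a = q^ℓ with ℓ a non-negative integer; i.e. β_L = Σ_{r=0}^{L} α_r / ((q)_{L-r} (q^{ℓ+1};q)_{L+r}) for all L ≥ 0. Define sequences α̃, β̃ in F by: α̃_m = 0 for 0 ≤ m ≤ ℓ-1, α̃_{2L+ℓ} = α_L and α̃_{2L+ℓ+1} = 0 for L ≥ 0; and β̃_m = 0 for 0 ≤ m ≤ ℓ-1, β̃_{L+ℓ} = Σ_{s=0, s ≡ L (mod 2)}^{L} q^{s²/2} / ((q)_ℓ (q)_s) · β_{(L-s)/2} for L ≥ 0. Then (α̃, β̃) forms a trinomial Bailey pair relative to 0, i.e. β̃_L = Σ_{r=0}^{L} Q_0(L, r, q) · α̃_r for every integer L ≥ 0. -/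

import Mathlib

open Finset

noncomputable section

/-- The field `F = RatFunc ℚ` of rational functions over `ℚ` in the variable `t`,
where `t` plays the role of `q^(1/2)`. -/
abbrev F : Type := RatFunc ℚ

/-- The variable `t = q^(1/2)`. -/
def t : F := RatFunc.X

/-- `q = t^2`. -/
def q : F := t ^ 2

/-- The Pochhammer symbol `(a; b)_n = ∏_{k=0}^{n-1} (1 - a bᵏ)`, set equal to `0` for
negative `n` (so that any term containing a factor `1/(a;b)_n` with `n < 0` vanishes). -/
def poch (b a : F) (n : ℤ) : F :=
  if n < 0 then 0 else ∏ k ∈ Finset.range n.toNat, (1 - a * b ^ k)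

/-- The `q`-trinomial coefficient `((L; B; qq))_{A,2}` with base `qq`:
`∑_j qq^(j(j+B)) (qq)_L / ((qq)_j (qq)_{j+A} (qq)_{L-2j-A})`; the sum is finite since
terms with a negative Pochhammer index in the denominator vanish. -/
def trinom (qq : F) (L : ℕ) (B A : ℤ) : F :=
  ∑ j ∈ Finset.range (L + 1),
    qq ^ ((j : ℤ) * ((j : ℤ) + B)) * poch qq qq (L : ℤ) /
      (poch qq qq (j : ℤ) * poch qq qq ((j : ℤ) + A) *
        poch qq qq ((L : ℤ) - 2 * (j : ℤ) - A))

/-- `T_n(L, A, q) = q^((L(L-n) - A(A-n))/2) ((L; A-n; q⁻¹))_{A,2}`; note `t ^ m = q ^ (m/2)`. -/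
def T (n : ℤ) (L : ℕ) (A : ℤ) : F :=
  t ^ ((L : ℤ) * ((L : ℤ) - n) - A * (A - n)) * trinom q⁻¹ L (A - n) A

/-- `Q_n(L, A, q) = T_n(L, A, q) / (q)_L`. -/
def Q (n : ℤ) (L : ℕ) (A : ℤ) : F := T n L A / poch q q (L : ℤ)


lemma ht : t ≠ 0 := RatFunc.X_ne_zero

lemma poch_natCast (b a : F) (n : ℕ) : poch b a (n : ℤ) = ∏ k ∈ Finset.range n, (1 - a * b ^ k) := by
  simp [poch]

lemma poch_neg (b a : F) (n : ℤ) (h : n < 0) : poch b a n = 0 := if_pos h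

lemma t_pow_ne_one (m : ℕ) (hm : m ≠ 0) : (t : F) ^ m ≠ 1 := by
  intro h
  have h2 : (algebraMap (Polynomial ℚ) F) (Polynomial.X ^ m) = (algebraMap (Polynomial ℚ) F) 1 := by
    rw [map_pow, RatFunc.algebraMap_X, map_one]; exact h
  have h3 := RatFunc.algebraMap_injective ℚ h2
  have := congrArg Polynomial.natDegree h3
  simp [Polynomial.natDegree_X_pow] at this
  omega

lemma one_sub_t_pow_ne (m : ℕ) (hm : m ≠ 0) : (1 : F) - t ^ m ≠ 0 := by
  intro h
  exact t_pow_ne_one m hm (by linear_combination -h)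

lemma poch_q_ne (n : ℕ) : poch q q (n : ℤ) ≠ 0 := by
  rw [poch_natCast, Finset.prod_ne_zero_iff]
  intro k _
  have : q * q ^ k = t ^ (2 * k + 2) := by rw [q]; ring
  rw [this]
  exact one_sub_t_pow_ne _ (by omega)

lemma pochinv_eq (n : ℕ) : poch q⁻¹ q⁻¹ (n : ℤ) = (-1) ^ n * (t ^ (n * (n + 1)))⁻¹ * poch q q (n : ℤ) := by
  induction n with
  | zero => simp [poch]
  | succ n ih =>
    rw [poch_natCast, Finset.prod_range_succ, ← poch_natCast, ih,
      poch_natCast q q (n+1), Finset.prod_range_succ, ← poch_natCast q q n]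
    have hq : q = t ^ 2 := rfl
    have h1 : q⁻¹ * (q⁻¹) ^ n = (t ^ (2 * n + 2))⁻¹ := by
      rw [hq, inv_pow, ← mul_inv, ← pow_mul, ← pow_add]; ring_nf
    have h2 : q * q ^ n = t ^ (2 * n + 2) := by rw [hq]; ring
    rw [h1, h2]
    have hpow : (t : F) ^ (2 * n + 2) ≠ 0 := pow_ne_zero _ ht
    have hpow2 : (t : F) ^ (n * (n + 1)) ≠ 0 := pow_ne_zero _ ht
    have hpow3 : (t : F) ^ ((n + 1) * (n + 1 + 1)) ≠ 0 := pow_ne_zero _ ht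
    field_simp
    ring

lemma term_eq (a r c L : ℕ) (h : a + (a + r) + c = L) :
    t ^ ((L:ℤ)*(L:ℤ) - (r:ℤ)*(r:ℤ)) * (q⁻¹ ^ ((a:ℤ) * ((a:ℤ) + (r:ℤ))) * poch q⁻¹ q⁻¹ (L:ℤ) /
        (poch q⁻¹ q⁻¹ (a:ℤ) * poch q⁻¹ q⁻¹ ((a:ℤ) + (r:ℤ)) * poch q⁻¹ q⁻¹ (c:ℤ))) /
      poch q q (L:ℤ)
    = t ^ (c^2) / (poch q q (a:ℤ) * poch q q ((a:ℤ) + (r:ℤ)) * poch q q (c:ℤ)) := by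
  rw [show ((a:ℤ) + (r:ℤ)) = ((a+r : ℕ) : ℤ) from by push_cast; ring]
  have hr : r ≤ L := by omega
  have hrr : r * r ≤ L * L := Nat.mul_le_mul hr hr
  have e1 : ((L:ℤ)*L - (r:ℤ)*r) = ((L*L - r*r : ℕ) : ℤ) := by
    rw [Nat.cast_sub hrr]; push_cast; ring
  have e2 : ((a:ℤ) * ((a+r:ℕ):ℤ)) = ((a*(a+r) : ℕ) : ℤ) := by push_cast; ring
  rw [e1, e2, zpow_natCast, zpow_natCast, inv_pow,
    pochinv_eq a, pochinv_eq (a+r), pochinv_eq c, pochinv_eq L]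
  subst h
  have hD : (a+(a+r)+c)*(a+(a+r)+c) - r*r = 4*a*a+4*a*r+4*a*c+2*r*c+c*c := by
    have h2 : (a+(a+r)+c)*(a+(a+r)+c) = r*r + (4*a*a+4*a*r+4*a*c+2*r*c+c*c) := by ring
    rw [h2, Nat.add_sub_cancel_left]
  rw [hD]
  have Pa := poch_q_ne a
  have Pb := poch_q_ne (a+r)
  have Pc := poch_q_ne c
  have PL := poch_q_ne (a+(a+r)+c)
  have s1 : ((-1 : F)) ≠ 0 := by norm_num
  have hq : q = t ^ 2 := rfl
  rw [hq] at Pa Pb Pc PL ⊢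
  push_cast at Pa Pb Pc PL
  have ht0 : t ≠ 0 := ht
  field_simp
  rw [div_eq_iff (by simp [mul_eq_zero, pow_eq_zero_iff', ht0, Pa, Pb, Pc, PL])]
  have Pb' : poch (t ^ 2) (t ^ 2) ((a + r : ℕ) : ℤ) ≠ 0 := poch_q_ne (a + r)
  field_simp
  ring

lemma Q_eq (L r : ℕ) : Q 0 L (r:ℤ) = ∑ j ∈ Finset.range (L+1),
    t ^ (((L:ℤ) - 2*(j:ℤ) - (r:ℤ))^2) /
      (poch q q (j:ℤ) * poch q q ((j:ℤ) + (r:ℤ)) * poch q q ((L:ℤ) - 2*(j:ℤ) - (r:ℤ))) := by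
  simp only [Q, T, trinom, sub_zero]
  rw [Finset.mul_sum, Finset.sum_div]
  apply Finset.sum_congr rfl
  intro j hj
  rcases lt_or_ge ((L:ℤ) - 2*(j:ℤ) - (r:ℤ)) 0 with hneg | hpos
  · rw [poch_neg q⁻¹ q⁻¹ _ hneg, poch_neg q q _ hneg]
    simp
  · have h2 : 2*j + r ≤ L := by omega
    have hc : ((L - 2*j - r : ℕ):ℤ) = (L:ℤ) - 2*(j:ℤ) - (r:ℤ) := by omega
    have hsum : j + (j + r) + (L - 2*j - r) = L := by omega
    rw [← hc]
    rw [show (((L - 2*j - r : ℕ):ℤ))^2 = (((L - 2*j - r)^2 : ℕ):ℤ) from by push_cast; ring,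
      zpow_natCast]
    rw [← term_eq j r (L - 2*j - r) L hsum]

lemma Q_zero (L r : ℕ) (h : L < r) : Q 0 L (r:ℤ) = 0 := by
  rw [Q_eq]
  apply Finset.sum_eq_zero
  intro j hj
  rw [poch_neg q q ((L:ℤ) - 2*(j:ℤ) - (r:ℤ)) (by omega), mul_zero, div_zero]

lemma poch_merge (ℓ m : ℕ) : poch q q (ℓ:ℤ) * poch q (q^(ℓ+1)) (m:ℤ) = poch q q ((ℓ+m : ℕ):ℤ) := by
  rw [poch_natCast, poch_natCast, poch_natCast, Finset.prod_range_add]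
  congr 1
  apply Finset.prod_congr rfl
  intro k _
  congr 1
  ring


/-- Corollary 3 of Warnaar's note, case `n = 0`: a Bailey pair relative to `a = q^ℓ`
yields a trinomial Bailey pair relative to `0`. -/
theorem binomial_gives_trinomial_BP_n_zero (ℓ : ℕ) (α β αt βt : ℕ → F)
    (hBP : ∀ L : ℕ, β L = ∑ r ∈ Finset.range (L + 1),
      α r / (poch q q ((L : ℤ) - (r : ℤ)) * poch q (q ^ (ℓ + 1)) ((L : ℤ) + (r : ℤ))))
    (hαlow : ∀ m : ℕ, m < ℓ → αt m = 0)
    (hαeven : ∀ L : ℕ, αt (2 * L + ℓ) = α L)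
    (hαodd : ∀ L : ℕ, αt (2 * L + ℓ + 1) = 0)
    (hβlow : ∀ m : ℕ, m < ℓ → βt m = 0)
    (hβ : ∀ L : ℕ, βt (L + ℓ) = ∑ s ∈ Finset.range (L + 1),
      if s % 2 = L % 2 then
        t ^ (s ^ 2) / (poch q q (ℓ : ℤ) * poch q q (s : ℤ)) * β ((L - s) / 2)
      else 0) :
    ∀ L : ℕ, βt L = ∑ r ∈ Finset.range (L + 1), Q 0 L (r : ℤ) * αt r := by
  intro L
  rcases lt_or_ge L ℓ with hL | hL
  · rw [hβlow L hL]
    symm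
    apply Finset.sum_eq_zero
    intro r hr
    simp only [mem_range] at hr
    rw [hαlow r (by omega), mul_zero]
  · obtain ⟨M, rfl⟩ : ∃ M, L = M + ℓ := ⟨L - ℓ, by omega⟩
    -- canonical double-sum term
    set g : ℕ → ℕ → F := fun k i => α k *
      (t ^ (((M:ℤ) - 2*(i:ℤ))^2) /
        (poch q q ((i:ℤ) - (k:ℤ)) * poch q q ((i:ℤ) + (k:ℤ) + (ℓ:ℤ)) *
          poch q q ((M:ℤ) - 2*(i:ℤ)))) with hg
    set G : ℕ → F := fun i =>
      t ^ (((M:ℤ) - 2*(i:ℤ))^2) / (poch q q (ℓ:ℤ) * poch q q ((M:ℤ) - 2*(i:ℤ))) * β i with hG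
    have LHS : βt (M + ℓ) = ∑ k ∈ Finset.range (M+1), ∑ i ∈ Finset.range (M+1), g k i := by
      rw [hβ M]
      have step1 : ∑ s ∈ Finset.range (M + 1),
          (if s % 2 = M % 2 then
            t ^ (s ^ 2) / (poch q q (ℓ:ℤ) * poch q q (s:ℤ)) * β ((M - s) / 2) else 0)
          = ∑ i ∈ Finset.range (M/2 + 1), G i := by
        symm
        apply Finset.sum_of_injOn (fun i => M - 2*i)
        · intro x hx y hy hxy
          simp only [coe_range, Set.mem_Iio] at hx hy
          have : M - 2*x = M - 2*y := hxy
          omega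
        · intro x hx
          simp only [coe_range, Set.mem_Iio] at hx ⊢
          omega
        · intro s hs hns
          simp only [mem_range] at hs
          rw [if_neg]
          intro hpar
          apply hns
          simp only [coe_range, Set.mem_image, Set.mem_Iio]
          exact ⟨(M - s)/2, by omega, by omega⟩
        · intro i hi
          simp only [mem_range] at hi
          have h2i : 2*i ≤ M := by omega
          rw [if_pos (by omega)]
          rw [show (M - (M - 2*i))/2 = i from by omega]
          rw [show ((M - 2*i : ℕ):ℤ) = (M:ℤ) - 2*(i:ℤ) from by omega]
          rw [show t ^ ((M - 2*i)^2) = t ^ (((M:ℤ) - 2*(i:ℤ))^2) from by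
            rw [← zpow_natCast t ((M - 2*i)^2)]
            congr 1
            have e : ((M - 2*i : ℕ):ℤ) = (M:ℤ) - 2*(i:ℤ) := by omega
            push_cast
            rw [e]]
      rw [step1]
      have step2 : ∑ i ∈ Finset.range (M/2 + 1), G i = ∑ i ∈ Finset.range (M+1), G i := by
        apply Finset.sum_subset
        · apply Finset.range_subset_range.2; omega
        · intro x hx hnx
          simp only [mem_range] at hx hnx
          rw [hG]
          simp only
          rw [poch_neg q q ((M:ℤ) - 2*(x:ℤ)) (by omega), mul_zero, div_zero, zero_mul]
      rw [step2, ← Finset.sum_comm]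
      apply Finset.sum_congr rfl
      intro i hi
      simp only [mem_range] at hi
      rw [hG]
      simp only
      rw [hBP i, Finset.mul_sum]
      have step3 : ∀ kk ∈ Finset.range (M+1), kk ∉ Finset.range (i+1) →
          t ^ (((M:ℤ) - 2*(i:ℤ))^2) / (poch q q (ℓ:ℤ) * poch q q ((M:ℤ) - 2*(i:ℤ))) *
            (α kk / (poch q q ((i:ℤ) - (kk:ℤ)) * poch q (q^(ℓ+1)) ((i:ℤ) + (kk:ℤ)))) = 0 := by
        intro kk hk hnk
        simp only [mem_range] at hk hnk
        rw [poch_neg q q ((i:ℤ) - (kk:ℤ)) (by omega), zero_mul, div_zero, mul_zero]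
      rw [Finset.sum_subset (Finset.range_subset_range.2 (by omega : i + 1 ≤ M + 1)) step3]
      apply Finset.sum_congr rfl
      intro k hk
      have merge : poch q q (ℓ:ℤ) * poch q (q^(ℓ+1)) ((i:ℤ) + (k:ℤ)) = poch q q ((i:ℤ) + (k:ℤ) + (ℓ:ℤ)) := by
        have hm := poch_merge ℓ (i+k)
        rw [show ((i+k : ℕ):ℤ) = (i:ℤ) + (k:ℤ) from by push_cast; ring,
          show ((ℓ+(i+k) : ℕ):ℤ) = (i:ℤ) + (k:ℤ) + (ℓ:ℤ) from by push_cast; ring] at hm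
        exact hm
      rw [hg]
      simp only
      rw [← merge]
      ring
    have R1 : ∑ r ∈ Finset.range (M+ℓ+1), Q 0 (M+ℓ) (r:ℤ) * αt r
        = ∑ k ∈ Finset.range (M/2+1), Q 0 (M+ℓ) ((2*k+ℓ : ℕ):ℤ) * α k := by
      symm
      apply Finset.sum_of_injOn (fun k => 2*k+ℓ)
      · intro x hx y hy hxy
        have : 2*x+ℓ = 2*y+ℓ := hxy
        omega
      · intro x hx
        simp only [coe_range, Set.mem_Iio] at hx ⊢
        omega
      · intro r hr hnr
        simp only [mem_range] at hr
        have hα : αt r = 0 := by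
          rcases lt_or_ge r ℓ with h1 | h1
          · exact hαlow r h1
          · rcases Nat.even_or_odd (r - ℓ) with ⟨d, hd⟩ | ⟨d, hd⟩
            · exfalso
              apply hnr
              simp only [coe_range, Set.mem_image, Set.mem_Iio]
              exact ⟨d, by omega, by omega⟩
            · rw [show r = 2*d+ℓ+1 from by omega]
              exact hαodd d
        rw [hα, mul_zero]
      · intro k hk
        rw [hαeven k]
    have R2 : ∑ k ∈ Finset.range (M/2+1), Q 0 (M+ℓ) ((2*k+ℓ : ℕ):ℤ) * α k
        = ∑ k ∈ Finset.range (M+1), Q 0 (M+ℓ) ((2*k+ℓ : ℕ):ℤ) * α k := by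
      apply Finset.sum_subset (Finset.range_subset_range.2 (by omega))
      intro k hk hnk
      simp only [mem_range] at hk hnk
      rw [Q_zero (M+ℓ) (2*k+ℓ) (by omega), zero_mul]
    have R3 : ∀ k ∈ Finset.range (M+1), Q 0 (M+ℓ) ((2*k+ℓ : ℕ):ℤ) * α k
        = ∑ i ∈ Finset.range (M+1), g k i := by
      intro k hk
      simp only [mem_range] at hk
      rw [Q_eq (M+ℓ) (2*k+ℓ), Finset.sum_mul]
      have inner : ∑ j ∈ Finset.range ((M+ℓ)+1),
          (t ^ ((((M+ℓ:ℕ):ℤ) - 2*(j:ℤ) - ((2*k+ℓ:ℕ):ℤ))^2) /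
            (poch q q (j:ℤ) * poch q q ((j:ℤ) + ((2*k+ℓ:ℕ):ℤ)) *
              poch q q (((M+ℓ:ℕ):ℤ) - 2*(j:ℤ) - ((2*k+ℓ:ℕ):ℤ)))) * α k
          = ∑ i ∈ Finset.range (M+ℓ+k+1), g k i := by
        apply Finset.sum_of_injOn (fun j => j + k)
        · intro x hx y hy hxy
          have : x + k = y + k := hxy
          omega
        · intro x hx
          simp only [coe_range, Set.mem_Iio] at hx ⊢
          omega
        · intro i hi hni
          simp only [mem_range] at hi
          have hik : i < k := by
            by_contra hc
            apply hni
            simp only [coe_range, Set.mem_image, Set.mem_Iio]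
            exact ⟨i - k, by omega, by omega⟩
          rw [hg]
          simp only
          rw [poch_neg q q ((i:ℤ) - (k:ℤ)) (by omega), zero_mul, zero_mul, div_zero, mul_zero]
        · intro j hj
          simp only [mem_range] at hj
          rw [hg]
          simp only
          rw [show ((j+k:ℕ):ℤ) - (k:ℤ) = (j:ℤ) from by push_cast; ring,
              show ((j+k:ℕ):ℤ) + (k:ℤ) + (ℓ:ℤ) = (j:ℤ) + ((2*k+ℓ:ℕ):ℤ) from by push_cast; ring,
              show (M:ℤ) - 2*((j+k:ℕ):ℤ) = ((M+ℓ:ℕ):ℤ) - 2*(j:ℤ) - ((2*k+ℓ:ℕ):ℤ) from by push_cast; ring]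
          ring
      rw [inner]
      symm
      apply Finset.sum_subset (Finset.range_subset_range.2 (by omega))
      intro i hi hni
      simp only [mem_range] at hi hni
      rw [hg]
      simp only
      rw [poch_neg q q ((M:ℤ) - 2*(i:ℤ)) (by omega), mul_zero, div_zero, mul_zero]
    rw [LHS, R1, R2]
    exact (Finset.sum_congr rfl R3).symm

end
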